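/- For every l with 0 ≤ l ≤ M−1, Tr(ρ̃ · O_l) = Re(c̃_l)/(Δ·γ²), where O_l = (H_l ⊗ X)/2 and X is the Pauli-X matrix. -/

import Mathlib

open Matrix Kronecker

/-- for the resource state `ρ̃` built from the block-encoded Hamiltonian
`H̃/Δ`, `Tr(ρ̃·O_l) = Re(c̃_l)/(Δ·γ²)` with `O_l = (H_l ⊗ X)/2`. -/
theorem blockEncoded_resourceState_decoding (d M : ℕ) (hd : 0 < d) (hM : 0 < M)
    (Hm : Fin M → Matrix (Fin d) (Fin d) ℂ)
    (hherm : ∀ m, (Hm m).IsHermitian)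
    (hunit : ∀ m, Hm m ∈ Matrix.unitaryGroup (Fin d) ℂ)
    (hortho : ∀ j k, (Hm j * Hm k).trace / (d : ℂ) = if j = k then 1 else 0)
    (ctil : Fin M → ℂ) (Δ : ℝ) (hΔ : 0 < Δ)
    (Htil : Matrix (Fin d) (Fin d) ℂ) (hHtil : Htil = ∑ m, ctil m • Hm m)
    (γsq : ℝ) (hγsq : γsq = (∑ m, Complex.normSq (ctil m)) / Δ ^ 2 + 1)
    (ρtil : Matrix (Fin d × Fin 2) (Fin d × Fin 2) ℂ)
    (hρ : ρtil = ((d : ℂ) * (γsq : ℂ))⁻¹ •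
      ((((Δ : ℂ) ^ 2)⁻¹ • (Htilᴴ * Htil))
          ⊗ₖ Matrix.single (0 : Fin 2) (0 : Fin 2) (1 : ℂ)
        + ((Δ : ℂ)⁻¹ • Htil) ⊗ₖ Matrix.single (0 : Fin 2) (1 : Fin 2) (1 : ℂ)
        + ((Δ : ℂ)⁻¹ • Htilᴴ) ⊗ₖ Matrix.single (1 : Fin 2) (0 : Fin 2) (1 : ℂ)
        + (1 : Matrix (Fin d) (Fin d) ℂ)
            ⊗ₖ Matrix.single (1 : Fin 2) (1 : Fin 2) (1 : ℂ))) :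
    ∀ l : Fin M,
      (ρtil * ((2 : ℂ)⁻¹ • (Hm l ⊗ₖ
          (Matrix.single (0 : Fin 2) (1 : Fin 2) (1 : ℂ)
            + Matrix.single (1 : Fin 2) (0 : Fin 2) (1 : ℂ))))).trace
        = (((ctil l).re : ℝ) : ℂ) / ((Δ : ℂ) * (γsq : ℂ)) := by
  intro l
  have hd0 : (d : ℂ) ≠ 0 := Nat.cast_ne_zero.mpr hd.ne'
  have hΔ0 : (Δ : ℂ) ≠ 0 := by exact_mod_cast hΔ.ne'
  have hγpos : (0:ℝ) < γsq := by
    rw [hγsq]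
    have : 0 ≤ (∑ m, Complex.normSq (ctil m)) / Δ ^ 2 :=
      div_nonneg (Finset.sum_nonneg fun m _ => Complex.normSq_nonneg _) (sq_nonneg _)
    linarith
  have hγ0 : (γsq : ℂ) ≠ 0 := by exact_mod_cast hγpos.ne'
  have htr : ∀ j k, (Hm j * Hm k).trace = if j = k then (d:ℂ) else 0 := by
    intro j k
    have h := hortho j k
    field_simp at h
    rw [h]; split_ifs <;> simp
  have htr1 : (Htil * Hm l).trace = ctil l * d := by
    rw [hHtil, Finset.sum_mul, trace_sum]
    simp only [smul_mul_assoc, trace_smul, htr]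
    rw [Finset.sum_eq_single l]
    · simp
    · intro b _ hb; simp [hb]
    · simp
  have htr2 : (Htilᴴ * Hm l).trace = (starRingEnd ℂ) (ctil l) * d := by
    have : Htilᴴ = ∑ m, (starRingEnd ℂ) (ctil m) • Hm m := by
      rw [hHtil, conjTranspose_sum]
      congr 1; ext m
      rw [conjTranspose_smul, (hherm m).eq]
      rfl
    rw [this, Finset.sum_mul, trace_sum]
    simp only [smul_mul_assoc, trace_smul, htr]
    rw [Finset.sum_eq_single l]
    · simp
    · intro b _ hb; simp [hb]
    · simp
  subst hρ
  simp only [Matrix.kronecker_add, Matrix.add_kronecker, Matrix.smul_kronecker,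
    smul_mul_assoc, mul_smul_comm, Matrix.mul_add, Matrix.add_mul,
    ← Matrix.mul_kronecker_mul, trace_add, trace_smul, Matrix.trace_kronecker,
    Matrix.one_mul, htr1, htr2]
  have e00 : (Matrix.single (0:Fin 2) (0:Fin 2) (1:ℂ) * Matrix.single (0:Fin 2) (1:Fin 2) (1:ℂ)).trace = 0 := by
    simp [Matrix.trace_fin_two, Matrix.mul_apply, Fin.sum_univ_two, Matrix.single]
  have e01 : (Matrix.single (0:Fin 2) (0:Fin 2) (1:ℂ) * Matrix.single (1:Fin 2) (0:Fin 2) (1:ℂ)).trace = 0 := by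
    simp [Matrix.trace_fin_two, Matrix.mul_apply, Fin.sum_univ_two, Matrix.single]
  have e10 : (Matrix.single (0:Fin 2) (1:Fin 2) (1:ℂ) * Matrix.single (0:Fin 2) (1:Fin 2) (1:ℂ)).trace = 0 := by
    simp [Matrix.trace_fin_two, Matrix.mul_apply, Fin.sum_univ_two, Matrix.single]
  have e11 : (Matrix.single (0:Fin 2) (1:Fin 2) (1:ℂ) * Matrix.single (1:Fin 2) (0:Fin 2) (1:ℂ)).trace = 1 := by
    simp [Matrix.trace_fin_two, Matrix.mul_apply, Fin.sum_univ_two, Matrix.single]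
  have f01 : (Matrix.single (1:Fin 2) (0:Fin 2) (1:ℂ) * Matrix.single (0:Fin 2) (1:Fin 2) (1:ℂ)).trace = 1 := by
    simp [Matrix.trace_fin_two, Matrix.mul_apply, Fin.sum_univ_two, Matrix.single]
  have f11 : (Matrix.single (1:Fin 2) (0:Fin 2) (1:ℂ) * Matrix.single (1:Fin 2) (0:Fin 2) (1:ℂ)).trace = 0 := by
    simp [Matrix.trace_fin_two, Matrix.mul_apply, Fin.sum_univ_two, Matrix.single]
  have g01 : (Matrix.single (1:Fin 2) (1:Fin 2) (1:ℂ) * Matrix.single (0:Fin 2) (1:Fin 2) (1:ℂ)).trace = 0 := by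
    simp [Matrix.trace_fin_two, Matrix.mul_apply, Fin.sum_univ_two, Matrix.single]
  have g11 : (Matrix.single (1:Fin 2) (1:Fin 2) (1:ℂ) * Matrix.single (1:Fin 2) (0:Fin 2) (1:ℂ)).trace = 0 := by
    simp [Matrix.trace_fin_two, Matrix.mul_apply, Fin.sum_univ_two, Matrix.single]
  simp only [e00, e01, e10, e11, f01, f11, g01, g11, mul_zero, mul_one, add_zero, zero_add]
  have hre : ctil l + (starRingEnd ℂ) (ctil l) = 2 * ((ctil l).re : ℂ) := by
    rw [Complex.add_conj]; push_cast; ring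
  field_simp
  ring_nf
  rw [show (starRingEnd ℂ) (ctil l) = 2 * ((ctil l).re : ℂ) - ctil l by linear_combination hre]
  ring_nf
  field_simp
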